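/- Let D ⊆ ℂ be a domain and suppose δU, δV, δW : D → ℝ are harmonic, satisfy δU + δV + δW = 0 on D, and the three combinations δU + (i/√3)(δV - δW), δV + (i/√3)(δW - δU), δW + (i/√3)(δU - δV) are holomorphic. If D is the open equilateral triangle and δU, δV, δW extend continuously to the closure vanishing respectively on the three sides (δU = 0 on one side, δV = 0 on a second, δW = 0 on the third), and all three functions are bounded, then δU = δV = δW = 0 on D. -/

import Mathlib

open Complex

/-- The third vertex `1/2 + i√3/2` of the unit equilateral triangle. -/
noncomputable def vtx3 : ℂ := 1 / 2 + I * (Real.sqrt 3 / 2)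

/-- The open equilateral triangle with vertices `0`, `1`, `1/2 + i√3/2`. -/
noncomputable def DTri : Set ℂ := interior (convexHull ℝ {0, 1, vtx3})

/-- Harmonicity (vanishing Laplacian) on a set. -/
noncomputable def IsHarmonicOn (f : ℂ → ℝ) (s : Set ℂ) : Prop :=
  ∀ z ∈ s,
    fderiv ℝ (fun w => fderiv ℝ f w 1) z 1 +
      fderiv ℝ (fun w => fderiv ℝ f w Complex.I) z Complex.I = 0

open Set

lemma DTri_open : IsOpen DTri := isOpen_interior

noncomputable def triPts : Fin 3 → ℂ := ![0, 1, vtx3]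

lemma vtx3_im : vtx3.im = Real.sqrt 3 / 2 := by simp [vtx3]

lemma range_triPts : Set.range triPts = ({0, 1, vtx3} : Set ℂ) := by
  ext x; simp [triPts]; tauto

lemma indep : AffineIndependent ℝ triPts := by
  rw [show triPts = ![0,1,vtx3] from rfl, affineIndependent_iff_not_collinear]
  intro hcol
  rw [show Set.range ![(0:ℂ),1,vtx3] = ({0,1,vtx3} : Set ℂ) from range_triPts] at hcol
  obtain ⟨v, hv⟩ := (collinear_iff_of_mem (by simp : (0:ℂ) ∈ ({0,1,vtx3} : Set ℂ))).mp hcol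
  obtain ⟨c1, hc1⟩ := hv 1 (by simp)
  obtain ⟨c2, hc2⟩ := hv vtx3 (by simp)
  simp only [vadd_eq_add, add_zero] at hc1 hc2
  have h3 : Real.sqrt 3 / 2 ≠ 0 := by positivity
  have hv_im : c1 * v.im = 0 := by
    have := congrArg Complex.im hc1; simpa using this.symm
  have hv_im2 : c2 * v.im = Real.sqrt 3 / 2 := by
    have := congrArg Complex.im hc2; simpa [vtx3_im] using this.symm
  have hc1ne : c1 ≠ 0 := by
    intro h; rw [h] at hc1; simp at hc1
  have : v.im = 0 := by
    rcases mul_eq_zero.mp hv_im with h | h; · exact absurd h hc1ne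
    · exact h
  rw [this, mul_zero] at hv_im2
  exact h3 hv_im2.symm

lemma tot : affineSpan ℝ (Set.range triPts) = ⊤ := by
  rw [indep.affineSpan_eq_top_iff_card_eq_finrank_add_one]
  simp [Complex.finrank_real_complex]

noncomputable def triBasis : AffineBasis (Fin 3) ℝ ℂ := ⟨triPts, indep, tot⟩

lemma DTri_eq : DTri = {x | ∀ i, 0 < triBasis.coord i x} := by
  rw [DTri, ← range_triPts, show Set.range triPts = Set.range triBasis from rfl,
    triBasis.interior_convexHull]

lemma hull_eq : convexHull ℝ ({0,1,vtx3} : Set ℂ) = {x | ∀ i, 0 ≤ triBasis.coord i x} := by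
  rw [← range_triPts, show Set.range triPts = Set.range triBasis from rfl,
    triBasis.convexHull_eq_nonneg_coord]

lemma DTri_nonempty : DTri.Nonempty := by
  refine ⟨Finset.univ.centroid ℝ triPts, ?_⟩
  have := triBasis.centroid_mem_interior_convexHull
  rwa [show Set.range triBasis = Set.range triPts from rfl, range_triPts] at this

lemma convex_DTri : Convex ℝ DTri := (convex_convexHull ℝ _).interior

lemma closure_DTri : closure DTri = convexHull ℝ ({0,1,vtx3} : Set ℂ) := by
  have hcl : IsClosed (convexHull ℝ ({0,1,vtx3} : Set ℂ)) :=
    (Set.Finite.isCompact_convexHull ℝ (Set.toFinite _)).isClosed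
  apply Subset.antisymm
  · rw [← hcl.closure_eq]; exact closure_mono interior_subset
  · intro x hx
    obtain ⟨y, hy⟩ := DTri_nonempty
    have hseg : openSegment ℝ y x ⊆ DTri :=
      (convex_convexHull ℝ _).openSegment_interior_closure_subset_interior hy
        (subset_closure hx)
    exact closure_mono hseg (segment_subset_closure_openSegment (right_mem_segment ℝ y x))

lemma frontier_DTri_subset :
    frontier DTri ⊆ segment ℝ (0:ℂ) 1 ∪ segment ℝ (1:ℂ) vtx3 ∪ segment ℝ (0:ℂ) vtx3 := by
  intro z hz
  have hzT : z ∈ convexHull ℝ ({0,1,vtx3} : Set ℂ) := by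
    rw [← closure_DTri]; exact hz.1
  have hznot : z ∉ DTri := by simpa [DTri] using hz.2
  have hnn : ∀ i, 0 ≤ triBasis.coord i z := by rwa [hull_eq] at hzT
  have hsum1 : ∑ i, triBasis.coord i z = 1 := triBasis.sum_coord_apply_eq_one z
  have hcomb : ∑ i, triBasis.coord i z • triPts i = z := by
    exact triBasis.linear_combination_coord_eq_self z
  rw [Fin.sum_univ_three] at hsum1 hcomb
  simp only [triPts, Matrix.cons_val_zero, Matrix.cons_val_one, Matrix.head_cons,
    Matrix.cons_val_two, Matrix.tail_cons, smul_zero, zero_add] at hcomb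
  have hex : triBasis.coord 0 z = 0 ∨ triBasis.coord 1 z = 0 ∨ triBasis.coord 2 z = 0 := by
    by_contra h
    push_neg at h
    exact hznot (DTri_eq ▸ (fun i => by
      fin_cases i
      · exact lt_of_le_of_ne (hnn 0) (Ne.symm h.1)
      · exact lt_of_le_of_ne (hnn 1) (Ne.symm h.2.1)
      · exact lt_of_le_of_ne (hnn 2) (Ne.symm h.2.2)))
  rcases hex with ha | hb | hc
  · refine Or.inl (Or.inr ?_)
    exact ⟨triBasis.coord 1 z, triBasis.coord 2 z, hnn 1, hnn 2, by linarith, hcomb⟩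
  · refine Or.inr ?_
    refine ⟨triBasis.coord 0 z, triBasis.coord 2 z, hnn 0, hnn 2, by linarith, ?_⟩
    rw [hb, zero_smul, zero_add] at hcomb
    simpa using hcomb
  · refine Or.inl (Or.inl ?_)
    refine ⟨triBasis.coord 0 z, triBasis.coord 1 z, hnn 0, hnn 1, by linarith, ?_⟩
    rw [hc, zero_smul, add_zero] at hcomb
    simpa using hcomb

lemma eq_on_closure_pt {E : Type*} [TopologicalSpace E] [T2Space E] {f : ℂ → E} {c : E}
    (hf : ContinuousOn f (closure DTri)) (h : ∀ z ∈ DTri, f z = c) {z : ℂ}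
    (hz : z ∈ closure DTri) : f z = c := by
  have h1 : Filter.Tendsto f (nhdsWithin z DTri) (nhds (f z)) :=
    (hf z hz).mono subset_closure
  have hne : (nhdsWithin z DTri).NeBot := mem_closure_iff_nhdsWithin_neBot.mp hz
  have h2 : Filter.Tendsto f (nhdsWithin z DTri) (nhds c) := by
    refine Filter.Tendsto.congr' ?_ tendsto_const_nhds
    filter_upwards [self_mem_nhdsWithin] with x hx using (h x hx).symm
  exact tendsto_nhds_unique h1 h2

lemma seg01_subset : segment ℝ (0:ℂ) 1 ⊆ closure DTri := by
  rw [closure_DTri, ← convexHull_pair]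
  exact convexHull_mono (by intro x hx; simp at hx; rcases hx with h|h <;> simp [h])

lemma seg1v_subset : segment ℝ (1:ℂ) vtx3 ⊆ closure DTri := by
  rw [closure_DTri, ← convexHull_pair]
  exact convexHull_mono (by intro x hx; simp at hx; rcases hx with h|h <;> simp [h])

lemma seg0v_subset : segment ℝ (0:ℂ) vtx3 ⊆ closure DTri := by
  rw [closure_DTri, ← convexHull_pair]
  exact convexHull_mono (by intro x hx; simp at hx; rcases hx with h|h <;> simp [h])

lemma cube_re (a b : ℝ) : (((a:ℂ) + (b:ℂ)*I)^3).re = a^3 - 3*a*b^2 := by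
  simp [pow_succ, Complex.mul_re, Complex.mul_im]
  ring


theorem stmt13 (δU δV δW : ℂ → ℝ)
    (hUh : IsHarmonicOn δU DTri) (hVh : IsHarmonicOn δV DTri)
    (hWh : IsHarmonicOn δW DTri)
    (hsum : ∀ z ∈ DTri, δU z + δV z + δW z = 0)
    (h1 : DifferentiableOn ℂ
      (fun z => (δU z : ℂ) + (I / Real.sqrt 3) * ((δV z : ℂ) - (δW z : ℂ))) DTri)
    (h2 : DifferentiableOn ℂ
      (fun z => (δV z : ℂ) + (I / Real.sqrt 3) * ((δW z : ℂ) - (δU z : ℂ))) DTri)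
    (h3 : DifferentiableOn ℂ
      (fun z => (δW z : ℂ) + (I / Real.sqrt 3) * ((δU z : ℂ) - (δV z : ℂ))) DTri)
    (hUc : ContinuousOn δU (closure DTri)) (hVc : ContinuousOn δV (closure DTri))
    (hWc : ContinuousOn δW (closure DTri))
    (hUb : ∀ z ∈ segment ℝ (0 : ℂ) 1, δU z = 0)
    (hVb : ∀ z ∈ segment ℝ (1 : ℂ) vtx3, δV z = 0)
    (hWb : ∀ z ∈ segment ℝ (0 : ℂ) vtx3, δW z = 0)
    (hbdd : ∃ M : ℝ, ∀ z ∈ DTri, |δU z| ≤ M ∧ |δV z| ≤ M ∧ |δW z| ≤ M) :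
    ∀ z ∈ DTri, δU z = 0 ∧ δV z = 0 ∧ δW z = 0 := by
  classical
  have hs0 : (0:ℝ) < Real.sqrt 3 := by positivity
  have hs2 : (Real.sqrt 3)^2 = 3 := Real.sq_sqrt (by norm_num)
  set Φ : ℂ → ℂ :=
    fun z => (δU z : ℂ) + (I / Real.sqrt 3) * ((δV z : ℂ) - (δW z : ℂ)) with hΦdef
  have hΦd : DifferentiableOn ℂ Φ DTri := h1
  have hform : ∀ z, Φ z = ((δU z : ℝ) : ℂ) + (((δV z - δW z)/Real.sqrt 3 : ℝ) : ℂ) * I := by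
    intro z
    rw [hΦdef]
    push_cast
    field_simp
  have hΦc : ContinuousOn Φ (closure DTri) := by
    rw [hΦdef]
    exact (Complex.continuous_ofReal.comp_continuousOn hUc).add
      (continuousOn_const.mul ((Complex.continuous_ofReal.comp_continuousOn hVc).sub
        (Complex.continuous_ofReal.comp_continuousOn hWc)))
  -- sum vanishes on the closure
  have hsumcl : ∀ z ∈ closure DTri, δU z + δV z + δW z = 0 := by
    intro z hz
    exact eq_on_closure_pt (f := fun z => δU z + δV z + δW z)
      ((hUc.add hVc).add hWc) hsum hz
  -- Re (Φ^3) vanishes on the frontier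
  have hfr : ∀ z ∈ frontier DTri, ((Φ z)^3).re = 0 := by
    intro z hz
    have hzcl : z ∈ closure DTri := frontier_subset_closure hz
    rw [hform z, cube_re]
    rcases frontier_DTri_subset hz with (h | h) | h
    · rw [hUb z h]; ring
    · have hV0 : δV z = 0 := hVb z h
      have hW : δW z = -δU z := by have := hsumcl z hzcl; linarith
      rw [hV0, hW]
      have : ((0 : ℝ) - -δU z) / Real.sqrt 3 = δU z / Real.sqrt 3 := by ring
      rw [this, div_pow, hs2]
      field_simp
      ring
    · have hW0 : δW z = 0 := hWb z h
      have hV : δV z = -δU z := by have := hsumcl z hzcl; linarith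
      rw [hW0, hV]
      have : ((-δU z : ℝ) - 0) / Real.sqrt 3 = -δU z / Real.sqrt 3 := by ring
      rw [this, div_pow, neg_pow, hs2]
      field_simp
      ring
  -- boundedness & diff-cont structure
  have hBdd : Bornology.IsBounded DTri :=
    ((Set.toFinite ({0,1,vtx3} : Set ℂ)).isCompact_convexHull ℝ).isBounded.subset interior_subset
  have hgd : DifferentiableOn ℂ (fun z => (Φ z)^3) DTri := hΦd.pow 3
  have hgc : ContinuousOn (fun z => (Φ z)^3) (closure DTri) := hΦc.pow 3
  -- Re (Φ^3) = 0 inside, via exp(±Φ³) and the maximum principle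
  have hre0 : ∀ z ∈ DTri, ((Φ z)^3).re = 0 := by
    intro z hz
    have hle : ((Φ z)^3).re ≤ 0 := by
      have := Complex.norm_le_of_forall_mem_frontier_norm_le (f := fun z => Complex.exp ((Φ z)^3))
        hBdd ⟨hgd.cexp, hgc.cexp⟩ (C := 1)
        (fun w hw => by
          rw [Complex.norm_exp, hfr w hw, Real.exp_zero])
        (subset_closure hz)
      rw [Complex.norm_exp, Real.exp_le_one_iff] at this
      exact this
    have hge : 0 ≤ ((Φ z)^3).re := by
      have := Complex.norm_le_of_forall_mem_frontier_norm_le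
        (f := fun z => Complex.exp (-(Φ z)^3))
        hBdd ⟨hgd.neg.cexp, hgc.neg.cexp⟩ (C := 1)
        (fun w hw => by
          rw [Complex.norm_exp, Complex.neg_re, hfr w hw, neg_zero,
            Real.exp_zero])
        (subset_closure hz)
      rw [Complex.norm_exp, Complex.neg_re, Real.exp_le_one_iff,
        neg_nonpos] at this
      exact this
    linarith
  -- exp(Φ³) is constant on DTri
  obtain ⟨z₀, hz₀⟩ := DTri_nonempty
  have hmax : IsMaxOn (norm ∘ fun z => Complex.exp ((Φ z)^3)) DTri z₀ := by
    intro x hx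
    show ‖Complex.exp (Φ x ^ 3)‖ ≤ ‖Complex.exp (Φ z₀ ^ 3)‖
    rw [Complex.norm_exp, Complex.norm_exp,
      hre0 x hx, hre0 z₀ hz₀]
  have hconst : Set.EqOn (fun z => Complex.exp ((Φ z)^3))
      (Function.const ℂ (Complex.exp ((Φ z₀)^3))) DTri :=
    Complex.eqOn_of_isPreconnected_of_isMaxOn_norm convex_DTri.isPreconnected
      isOpen_interior hgd.cexp hz₀ hmax
  -- hence deriv of Φ³ vanishes, so Φ³ is constant
  have hderiv0 : ∀ z ∈ DTri, deriv (fun w => (Φ w)^3) z = 0 := by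
    intro z hz
    have hga : DifferentiableAt ℂ (fun w => (Φ w)^3) z :=
      hgd.differentiableAt (isOpen_interior.mem_nhds hz)
    have hEx : HasDerivAt (fun w => Complex.exp ((Φ w)^3))
        (Complex.exp ((Φ z)^3) * deriv (fun w => (Φ w)^3) z) z := hga.hasDerivAt.cexp
    have heq : (fun w => Complex.exp ((Φ w)^3)) =ᶠ[nhds z]
        (fun _ => Complex.exp ((Φ z₀)^3)) :=
      Filter.eventuallyEq_of_mem (isOpen_interior.mem_nhds hz) (fun x hx => hconst hx)
    have h0 : deriv (fun w => Complex.exp ((Φ w)^3)) z = 0 := by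
      rw [heq.deriv_eq]; exact deriv_const _ _
    rw [hEx.deriv] at h0
    exact (mul_eq_zero.mp h0).resolve_left (Complex.exp_ne_zero _)
  have hgconst : ∀ z ∈ DTri, (Φ z)^3 = (Φ z₀)^3 := by
    intro z hz
    exact convex_DTri.is_const_of_fderivWithin_eq_zero hgd
      (fun x hx => by
        rw [fderivWithin_of_isOpen DTri_open hx]
        ext1
        simp [← toSpanSingleton_deriv, hderiv0 x hx]) hz hz₀
  -- value at the vertex 1 is 0
  have h1cl : (1:ℂ) ∈ closure DTri := by
    rw [closure_DTri]; exact subset_convexHull ℝ _ (by simp)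
  have hU1 : δU 1 = 0 := hUb 1 (right_mem_segment ℝ 0 1)
  have hV1 : δV 1 = 0 := hVb 1 (left_mem_segment ℝ 1 vtx3)
  have hW1 : δW 1 = 0 := by have := hsumcl 1 h1cl; linarith
  have hΦ1 : Φ 1 = 0 := by rw [hform, hU1, hV1, hW1]; simp
  have hg1 : (Φ (1:ℂ))^3 = (Φ z₀)^3 :=
    eq_on_closure_pt hgc hgconst h1cl
  have hc0 : (Φ z₀)^3 = 0 := by rw [← hg1, hΦ1]; simp
  -- conclude Φ = 0 on DTri
  intro z hz
  have hΦz : Φ z = 0 := by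
    have := hgconst z hz
    rw [hc0] at this
    exact pow_eq_zero_iff (by norm_num) |>.mp this
  have hre : δU z = 0 := by
    have := congrArg Complex.re hΦz
    rw [hform] at this
    simpa using this
  have him : (δV z - δW z)/Real.sqrt 3 = 0 := by
    have := congrArg Complex.im hΦz
    rw [hform] at this
    simpa using this
  have hVW : δV z = δW z := by
    field_simp at him
    linarith
  have hsz := hsum z hz
  refine ⟨hre, by linarith, by linarith⟩
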